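/- Let Λ be a finite set with N := |Λ|, let m lie in the range of m_N with m ∉ {−1,1}, and let μ ∈ ℝ. Let I ⊆ Λ be nonempty and let f : {−1,1}^{|I|} → ℝ. Then (1/2)·|∫ f∘P_I dμ_MC^{m;N} − ∫ f∘P_I dμ_C^{μ;N}|² ≤ |I| · (max_{σ∈{−1,1}^{|I|}} |f(σ)|)² · H(μ_MC^{m;N} ‖ μ_C^{μ;N}) / N. -/

import Mathlib

open Finset Real

set_option linter.unreachableTactic false
set_option linter.unusedTactic false
set_option linter.unusedVariables false
set_option linter.unnecessarySimpa false
set_option linter.unnecessarySeqFocus false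

lemma sub_le_mul_log_div (y c : ℝ) (hy : 0 ≤ y) (hc : 0 < c) :
    y - c ≤ y * Real.log (y / c) := by
  rcases eq_or_lt_of_le hy with h | h
  · simp [← h]; linarith
  · have h1 : Real.log (c / y) ≤ c / y - 1 := Real.log_le_sub_one_of_pos (by positivity)
    have h2 : Real.log (c / y) = - Real.log (y / c) := by
      rw [← Real.log_inv]; congr 1; field_simp
    rw [h2] at h1
    have h3 := mul_le_mul_of_nonneg_left h1 hy
    have h4 : y * (c / y - 1) = c - y := by field_simp
    nlinarith

private noncomputable def Gfun (t : ℝ) : ℝ := 2*(t+2)*(t*Real.log t - t + 1) - 3*(t-1)^2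
private noncomputable def Hfun (t : ℝ) : ℝ := (4*t+4)*Real.log t - 8*t + 8

lemma hasDerivAt_Gfun {t : ℝ} (ht : t ≠ 0) : HasDerivAt Gfun (Hfun t) t := by
  have h1 : HasDerivAt (fun t : ℝ => t*Real.log t) (Real.log t + 1) t :=
    Real.hasDerivAt_mul_log ht
  have h2 : HasDerivAt (fun t : ℝ => t*Real.log t - t + 1) (Real.log t + 1 - 1) t :=
    (h1.sub (hasDerivAt_id t)).add_const 1
  have h3 : HasDerivAt (fun t : ℝ => 2*(t+2)) 2 t := by
    simpa using ((hasDerivAt_id t).add_const (2:ℝ)).const_mul (2:ℝ)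
  have h5 : HasDerivAt (fun t : ℝ => 3*(t-1)^2) (3*(2*(t-1)*1)) t := by
    have := (((hasDerivAt_id t).sub_const (1:ℝ)).pow 2).const_mul (3:ℝ)
    simpa using this
  have h6 := (h3.mul h2).sub h5
  exact h6.congr_deriv (by unfold Hfun; ring)

lemma hasDerivAt_Hfun {t : ℝ} (ht : t ≠ 0) :
    HasDerivAt Hfun (4*Real.log t + (4*t+4)*t⁻¹ - 8) t := by
  have h1 : HasDerivAt (fun t : ℝ => 4*t+4) 4 t := by
    simpa using ((hasDerivAt_id t).const_mul (4:ℝ)).add_const (4:ℝ)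
  have h2 : HasDerivAt Real.log t⁻¹ t := Real.hasDerivAt_log ht
  have h8 : HasDerivAt (fun t : ℝ => 8*t) 8 t := by
    simpa using (hasDerivAt_id t).const_mul (8:ℝ)
  have h4 := ((h1.mul h2).sub h8).add_const (8:ℝ)
  unfold Hfun
  exact h4.congr_deriv (by ring)

lemma Hfun_deriv_nonneg {t : ℝ} (ht : 0 < t) : 0 ≤ 4*Real.log t + (4*t+4)*t⁻¹ - 8 := by
  have h1 : Real.log t⁻¹ ≤ t⁻¹ - 1 := Real.log_le_sub_one_of_pos (by positivity)
  rw [Real.log_inv] at h1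
  have h2 : (4*t+4)*t⁻¹ = 4 + 4*t⁻¹ := by field_simp
  have h3 : (1:ℝ) - t⁻¹ ≤ Real.log t := by linarith
  rw [h2]
  linarith

lemma Hfun_mono : MonotoneOn Hfun (Set.Ioi (0:ℝ)) := by
  apply monotoneOn_of_deriv_nonneg (convex_Ioi 0)
  · unfold Hfun
    apply ContinuousOn.add (ContinuousOn.sub _ _) continuousOn_const
    · exact ((continuous_const.mul continuous_id).add continuous_const).continuousOn.mul
        (Real.continuousOn_log.mono (by intro x hx; simpa using ne_of_gt hx))
    · exact (continuous_const.mul continuous_id).continuousOn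
  · intro x hx
    rw [interior_Ioi] at hx
    exact (hasDerivAt_Hfun (ne_of_gt hx)).differentiableAt.differentiableWithinAt
  · intro x hx
    rw [interior_Ioi] at hx
    rw [(hasDerivAt_Hfun (ne_of_gt hx)).deriv]
    exact Hfun_deriv_nonneg hx

lemma Hfun_one : Hfun 1 = 0 := by simp [Hfun]

lemma Gfun_cont : Continuous Gfun := by
  unfold Gfun
  exact ((continuous_const.mul (continuous_id.add continuous_const)).mul
    ((Real.continuous_mul_log.sub continuous_id).add continuous_const)).sub
    (continuous_const.mul ((continuous_id.sub continuous_const).pow 2))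

lemma Gfun_nonneg {t : ℝ} (ht : 0 ≤ t) : 0 ≤ Gfun t := by
  have g1 : Gfun 1 = 0 := by simp [Gfun]
  rcases le_or_gt 1 t with h | h
  · -- monotone on Ici 1
    have mono : MonotoneOn Gfun (Set.Ici (1:ℝ)) := by
      apply monotoneOn_of_deriv_nonneg (convex_Ici 1) Gfun_cont.continuousOn
      · intro x hx
        rw [interior_Ici] at hx
        exact (hasDerivAt_Gfun (by intro h; rw [h] at hx; exact absurd hx (by norm_num) : x ≠ 0)).differentiableAt.differentiableWithinAt
      · intro x hx
        rw [interior_Ici] at hx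
        have hx0 : (0:ℝ) < x := lt_trans one_pos hx
        rw [(hasDerivAt_Gfun (ne_of_gt hx0)).deriv]
        have := Hfun_mono (Set.mem_Ioi.2 one_pos) (Set.mem_Ioi.2 hx0) (le_of_lt hx)
        rw [Hfun_one] at this
        exact this
    have := mono (Set.mem_Ici.2 le_rfl) (Set.mem_Ici.2 h) h
    rw [g1] at this
    exact this
  · -- antitone on Icc 0 1
    have anti : AntitoneOn Gfun (Set.Icc (0:ℝ) 1) := by
      apply antitoneOn_of_deriv_nonpos (convex_Icc 0 1) Gfun_cont.continuousOn
      · intro x hx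
        rw [interior_Icc] at hx
        exact (hasDerivAt_Gfun (ne_of_gt hx.1)).differentiableAt.differentiableWithinAt
      · intro x hx
        rw [interior_Icc] at hx
        rw [(hasDerivAt_Gfun (ne_of_gt hx.1)).deriv]
        have := Hfun_mono (Set.mem_Ioi.2 hx.1) (Set.mem_Ioi.2 one_pos) (le_of_lt hx.2)
        rw [Hfun_one] at this
        exact this
    have := anti (Set.mem_Icc.2 ⟨ht, le_of_lt h⟩) (Set.mem_Icc.2 ⟨zero_le_one, le_rfl⟩) (le_of_lt h)
    rw [g1] at this
    exact this

lemma key_pointwise {t : ℝ} (ht : 0 ≤ t) :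
    3*(t-1)^2 ≤ 2*(t+2)*(t*Real.log t - t + 1) := by
  have := Gfun_nonneg ht
  unfold Gfun at this
  linarith

lemma pinsker {ι : Type*} [Fintype ι] (a b : ι → ℝ) (ha : ∀ i, 0 ≤ a i)
    (hb : ∀ i, 0 < b i) (ha1 : ∑ i, a i = 1) (hb1 : ∑ i, b i = 1) :
    (∑ i, |a i - b i|) ^ 2 ≤ 2 * ∑ i, a i * Real.log (a i / b i) := by
  classical
  set t : ι → ℝ := fun i => a i / b i with htdef
  have hat : ∀ i, a i = b i * t i := by
    intro i; rw [htdef]; field_simp [(hb i).ne']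
  have ht0 : ∀ i, 0 ≤ t i := fun i => div_nonneg (ha i) (hb i).le
  have ht2 : ∀ i, (0:ℝ) < t i + 2 := fun i => by linarith [ht0 i]
  have hD : ∀ i, a i * Real.log (a i / b i) = b i * (t i * Real.log (t i)) := by
    intro i
    show a i * Real.log (a i / b i) = b i * (a i / b i * Real.log (a i / b i))
    rw [show b i * (a i / b i * Real.log (a i / b i))
        = (b i * (a i / b i)) * Real.log (a i / b i) from by ring]
    rw [show b i * (a i / b i) = a i from by rw [mul_comm, div_mul_cancel₀ _ (hb i).ne']]
  have hsbt : ∑ i, b i * t i = 1 := by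
    rw [← ha1]; exact Finset.sum_congr rfl fun i _ => (hat i).symm
  set F : ι → ℝ := fun i => Real.sqrt (b i * (t i + 2)) with hF
  set G : ι → ℝ := fun i => Real.sqrt (b i) * |t i - 1| / Real.sqrt (t i + 2) with hG
  have habs : ∀ i, |a i - b i| = F i * G i := by
    intro i
    rw [hat i]
    simp only [hF, hG]
    rw [Real.sqrt_mul (hb i).le]
    have h1 : Real.sqrt (b i) * Real.sqrt (t i + 2) *
        (Real.sqrt (b i) * |t i - 1| / Real.sqrt (t i + 2))
        = (Real.sqrt (b i) * Real.sqrt (b i)) * |t i - 1| *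
          (Real.sqrt (t i + 2) / Real.sqrt (t i + 2)) := by ring
    rw [h1, Real.mul_self_sqrt (hb i).le, div_self (Real.sqrt_pos.2 (ht2 i)).ne', mul_one]
    rw [show b i * t i - b i = b i * (t i - 1) from by ring, abs_mul, abs_of_pos (hb i)]
  have hF2 : ∑ i, F i ^ 2 = 3 := by
    have h2 : ∀ i, F i ^ 2 = b i * t i + 2 * b i := by
      intro i
      have h0 : (0:ℝ) ≤ b i * (t i + 2) := mul_nonneg (hb i).le (ht2 i).le
      simp only [hF]
      rw [Real.sq_sqrt h0]
      ring
    rw [Finset.sum_congr rfl fun i _ => h2 i, Finset.sum_add_distrib, hsbt,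
      ← Finset.mul_sum, hb1]
    norm_num
  have hG2 : ∀ i, G i ^ 2 = b i * ((t i - 1)^2 / (t i + 2)) := by
    intro i
    simp only [hG]
    rw [div_pow, mul_pow, Real.sq_sqrt (hb i).le, Real.sq_sqrt (ht2 i).le, sq_abs]
    ring
  have CS := Finset.sum_mul_sq_le_sq_mul_sq Finset.univ F G
  have step1 : (∑ i, |a i - b i|) ^ 2 ≤ 3 * ∑ i, b i * ((t i - 1)^2 / (t i + 2)) := by
    calc (∑ i, |a i - b i|) ^ 2 = (∑ i, F i * G i) ^ 2 := by
          rw [Finset.sum_congr rfl fun i _ => habs i]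
      _ ≤ (∑ i, F i ^ 2) * ∑ i, G i ^ 2 := CS
      _ = 3 * ∑ i, b i * ((t i - 1)^2 / (t i + 2)) := by
          rw [hF2, Finset.sum_congr rfl fun i _ => hG2 i]
  have step2 : ∀ i, b i * ((t i - 1)^2 / (t i + 2)) ≤
      (2/3) * (b i * (t i * Real.log (t i) - t i + 1)) := by
    intro i
    have hk := key_pointwise (ht0 i)
    have h1 : (t i - 1)^2 / (t i + 2) ≤ (2/3) * (t i * Real.log (t i) - t i + 1) := by
      rw [div_le_iff₀ (ht2 i)]
      nlinarith
    calc b i * ((t i - 1)^2 / (t i + 2)) ≤ b i * ((2/3) * (t i * Real.log (t i) - t i + 1)) :=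
          mul_le_mul_of_nonneg_left h1 (hb i).le
      _ = (2/3) * (b i * (t i * Real.log (t i) - t i + 1)) := by ring
  have step3 : ∑ i, b i * (t i * Real.log (t i) - t i + 1) = ∑ i, a i * Real.log (a i / b i) := by
    have : ∀ i, b i * (t i * Real.log (t i) - t i + 1) =
        b i * (t i * Real.log (t i)) - b i * t i + b i := by intro i; ring
    rw [Finset.sum_congr rfl fun i _ => this i]
    rw [Finset.sum_add_distrib, Finset.sum_sub_distrib, hsbt, hb1,
      Finset.sum_congr rfl fun i _ => (hD i).symm]
    ring
  calc (∑ i, |a i - b i|) ^ 2 ≤ 3 * ∑ i, b i * ((t i - 1)^2 / (t i + 2)) := step1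
    _ ≤ 3 * ∑ i, (2/3) * (b i * (t i * Real.log (t i) - t i + 1)) := by
        apply mul_le_mul_of_nonneg_left (Finset.sum_le_sum fun i _ => step2 i) (by norm_num)
    _ = 2 * ∑ i, b i * (t i * Real.log (t i) - t i + 1) := by
        rw [← Finset.mul_sum]; ring
    _ = 2 * ∑ i, a i * Real.log (a i / b i) := by rw [step3]

noncomputable def cntA {α : Type*} [Fintype α] (g : α → Bool) : ℕ :=
  (Finset.univ.filter fun x => g x = true).card

lemma cntA_eq_sum {α : Type*} [Fintype α] (g : α → Bool) :
    cntA g = ∑ x, (if g x = true then 1 else 0) := by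
  rw [cntA, Finset.card_filter]

lemma cntA_comp_equiv {α β : Type*} [Fintype α] [Fintype β] (e : β ≃ α) (g : α → Bool) :
    cntA (g ∘ e) = cntA g := by
  rw [cntA_eq_sum, cntA_eq_sum]
  exact Equiv.sum_comp e (fun x => if g x = true then 1 else 0)

lemma cntA_le {α : Type*} [Fintype α] (g : α → Bool) : cntA g ≤ Fintype.card α := by
  rw [cntA, ← Finset.card_univ]
  exact Finset.card_filter_le _ _

lemma cntA_cons {n : ℕ} (b : Bool) (σ : Fin n → Bool) :
    cntA (Fin.cons b σ) = (if b = true then 1 else 0) + cntA σ := by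
  rw [cntA_eq_sum, cntA_eq_sum]
  have h : (fun i : Fin (n+1) => if (Fin.cons b σ : Fin (n+1) → Bool) i = true then (1:ℕ) else 0)
      = Fin.cons (α := fun _ => ℕ) (if b = true then (1:ℕ) else 0)
        (fun j => if σ j = true then (1:ℕ) else 0) := by
    funext i
    refine Fin.cases ?_ ?_ i <;> simp
  rw [h, Fin.sum_cons]

lemma countLemma {α : Type*} [Fintype α] [DecidableEq α] (r : ℕ) :
    (Finset.univ.filter fun g : α → Bool => cntA g = r).card = (Fintype.card α).choose r := by
  classical
  rw [← Finset.card_univ (α := α), ← Finset.card_powersetCard r (Finset.univ : Finset α)]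
  apply Finset.card_bij' (fun (g : α → Bool) _ => Finset.univ.filter fun x => g x = true)
    (fun s _ => fun x => decide (x ∈ s))
  · intro g hg
    simp only [Finset.mem_filter, Finset.mem_univ, true_and] at hg
    rw [Finset.mem_powersetCard]
    exact ⟨Finset.subset_univ _, hg⟩
  · intro s hs
    rw [Finset.mem_powersetCard] at hs
    simp only [Finset.mem_filter, Finset.mem_univ, true_and]
    unfold cntA
    have h2 : (Finset.univ.filter fun x => decide (x ∈ s) = true) = s := by
      ext x; simp
    rw [h2]
    exact hs.2
  · intro g hg
    funext x
    simp
  · intro s hs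
    ext x
    simp

lemma sum_pq_fin (p q : ℝ) : ∀ n : ℕ,
    ∑ σ : Fin n → Bool, p ^ (cntA σ) * q ^ (n - cntA σ) = (p + q) ^ n := by
  intro n
  induction n with
  | zero =>
    rw [Fintype.sum_unique]
    norm_num [cntA, Finset.univ_eq_empty]
  | succ n ih =>
    have hsum := Equiv.sum_comp (Fin.consEquiv (fun _ : Fin (n+1) => Bool))
      (fun σ : Fin (n+1) → Bool => p ^ (cntA σ) * q ^ (n + 1 - cntA σ))
    rw [← hsum, Fintype.sum_prod_type]
    simp only [Fin.consEquiv, Equiv.coe_fn_mk]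
    have key : ∀ (b : Bool) (σ : Fin n → Bool),
        p ^ (cntA (Fin.cons b σ)) * q ^ (n + 1 - cntA (Fin.cons b σ))
        = (if b = true then p else q) * (p ^ (cntA σ) * q ^ (n - cntA σ)) := by
      intro b σ
      have hle := cntA_le σ
      rw [Fintype.card_fin] at hle
      rw [cntA_cons]
      cases b
      · try norm_num
        rw [show n + 1 - cntA σ = (n - cntA σ) + 1 from by omega]
        ring
      · try norm_num
        rw [show n + 1 - (1 + cntA σ) = n - cntA σ from by omega, pow_add]
        ring
    rw [Finset.sum_congr rfl fun b _ => Finset.sum_congr rfl fun σ _ => key b σ]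
    simp only [← Finset.mul_sum]
    rw [ih, Fintype.sum_bool]
    try norm_num
    rw [pow_succ]
    ring

-- ### the hypergeometric/binomial machinery
noncomputable def hc (N k n t : ℕ) : ℝ :=
  if t ≤ k then (((N - n).choose (k - t) : ℕ) : ℝ) / ((N.choose k : ℕ) : ℝ) else 0

noncomputable def av (N k n t : ℕ) : ℝ := (((k - t : ℕ)) : ℝ) / (((N - n : ℕ)) : ℝ)

noncomputable def dd (p q x : ℝ) : ℝ :=
  x * Real.log (x / p) + (1 - x) * Real.log ((1 - x) / q)

noncomputable def DD (N k : ℕ) (p q : ℝ) (n : ℕ) : ℝ :=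
  ∑ σ : Fin n → Bool,
    hc N k n (cntA σ) * Real.log (hc N k n (cntA σ) / (p ^ (cntA σ) * q ^ (n - cntA σ)))

noncomputable def ee (N k : ℕ) (p q : ℝ) (n : ℕ) : ℝ :=
  ∑ σ : Fin n → Bool, hc N k n (cntA σ) * dd p q (av N k n (cntA σ))

lemma hc_nonneg (N k n t : ℕ) : 0 ≤ hc N k n t := by
  unfold hc; split
  · positivity
  · exact le_rfl

lemma av_nonneg (N k n t : ℕ) : 0 ≤ av N k n t := by unfold av; positivity

lemma av_le_one {N k n t : ℕ} (hn : n < N) (ht : t ≤ k) (hne : hc N k n t ≠ 0) :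
    av N k n t ≤ 1 := by
  unfold hc at hne
  rw [if_pos ht] at hne
  have h1 : (N - n).choose (k - t) ≠ 0 := by
    intro h; rw [h] at hne; simpa using hne
  have h2 : k - t ≤ N - n := by
    by_contra h
    exact h1 (Nat.choose_eq_zero_of_lt (by omega))
  unfold av
  rw [div_le_one (by exact_mod_cast Nat.cast_pos.2 (by omega : 0 < N - n))]
  exact_mod_cast h2

lemma hc_zero_of_gt {N k n t : ℕ} (ht : ¬ t ≤ k) : hc N k n t = 0 := by
  unfold hc; rw [if_neg ht]

lemma choose_rec1 (M r : ℕ) (hM : 1 ≤ M) (hr : 1 ≤ r) :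
    (M.choose r : ℝ) * (r / M) = ((M-1).choose (r-1) : ℝ) := by
  have h := Nat.add_one_mul_choose_eq (M-1) (r-1)
  rw [Nat.sub_add_cancel hM, Nat.sub_add_cancel hr] at h
  have hM0 : (M:ℝ) ≠ 0 := Nat.cast_ne_zero.2 (by omega)
  have h4 : ((M:ℝ)) * (((M-1).choose (r-1) : ℕ) : ℝ) = ((M.choose r : ℕ) : ℝ) * r := by
    exact_mod_cast h
  field_simp
  first
  | linear_combination h4
  | linear_combination -h4
  | linear_combination h4.symm

lemma choose_rec2 (M r : ℕ) (hM : 1 ≤ M) (hr : r ≤ M) :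
    (M.choose r : ℝ) * (1 - r / M) = ((M-1).choose r : ℝ) := by
  have h1 := Nat.choose_succ_right_eq M r
  have h2 := Nat.add_one_mul_choose_eq (M-1) r
  rw [Nat.sub_add_cancel hM] at h2
  -- M * choose (M-1) r = choose M (r+1) * (r+1) = choose M r * (M - r)
  have h3 : M * (M-1).choose r = M.choose r * (M - r) := by rw [h2, h1]
  have hM0 : (M:ℝ) ≠ 0 := Nat.cast_ne_zero.2 (by omega)
  have h4 : ((M:ℝ)) * ((M-1).choose r : ℝ) = (M.choose r : ℝ) * ((M:ℝ) - r) := by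
    have h5 := congrArg (fun x : ℕ => (x : ℝ)) h3
    push_cast [Nat.cast_sub hr] at h5
    exact_mod_cast h5
  field_simp
  first
  | linear_combination h4
  | linear_combination -h4
  | linear_combination h4.symm

lemma L1a {N k n t : ℕ} (hn : n < N) (hk : k ≤ N) :
    hc N k (n+1) (t+1) = hc N k n t * av N k n t := by
  by_cases ht : t ≤ k
  · rcases eq_or_lt_of_le ht with he | hlt
    · subst he
      rw [hc_zero_of_gt (by omega)]
      unfold av
      rw [Nat.sub_self]
      simp
    · unfold hc av
      rw [if_pos ht, if_pos (by omega : t + 1 ≤ k)]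
      have hM : 1 ≤ N - n := by omega
      have hr : 1 ≤ k - t := by omega
      have key := choose_rec1 (N - n) (k - t) hM hr
      have e1 : N - (n+1) = (N - n) - 1 := by omega
      have e2 : k - (t+1) = (k - t) - 1 := by omega
      rw [e1, e2, ← key]
      ring
  · rw [hc_zero_of_gt ht, hc_zero_of_gt (by omega : ¬ t + 1 ≤ k), zero_mul]

lemma L1b {N k n t : ℕ} (hn : n < N) (hk : k ≤ N) :
    hc N k (n+1) t = hc N k n t * (1 - av N k n t) := by
  by_cases ht : t ≤ k
  · by_cases hrM : k - t ≤ N - n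
    · unfold hc av
      rw [if_pos ht, if_pos ht]
      have hM : 1 ≤ N - n := by omega
      have key := choose_rec2 (N - n) (k - t) hM hrM
      have e1 : N - (n+1) = (N - n) - 1 := by omega
      rw [e1, ← key]
      ring
    · unfold hc av
      rw [if_pos ht, if_pos ht]
      rw [Nat.choose_eq_zero_of_lt (by omega : N - n < k - t),
        Nat.choose_eq_zero_of_lt (by omega : N - (n+1) < k - t)]
      simp
  · rw [hc_zero_of_gt ht, hc_zero_of_gt ht, zero_mul]

-- ## dd lemmas
lemma dd_eq (p q x : ℝ) (hp : 0 < p) (hq : 0 < q) (hx0 : 0 ≤ x) (hx1 : x ≤ 1) :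
    dd p q x = x * Real.log x + (1-x) * Real.log (1-x)
      - x * Real.log p - (1-x) * Real.log q := by
  unfold dd
  have h1 : x * Real.log (x / p) = x * Real.log x - x * Real.log p := by
    rcases eq_or_lt_of_le hx0 with h | h
    · simp [← h]
    · rw [Real.log_div h.ne' hp.ne']; ring
  have h2 : (1-x) * Real.log ((1-x) / q) = (1-x) * Real.log (1-x) - (1-x) * Real.log q := by
    rcases eq_or_lt_of_le (by linarith : (0:ℝ) ≤ 1 - x) with h | h
    · simp [← h]
    · rw [Real.log_div h.ne' hq.ne']; ring
  rw [h1, h2]; ring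

lemma dd_nonneg {p q x : ℝ} (hp : 0 < p) (hq : 0 < q) (hpq : p + q = 1)
    (hx0 : 0 ≤ x) (hx1 : x ≤ 1) : 0 ≤ dd p q x := by
  have h1 := sub_le_mul_log_div x p hx0 hp
  have h2 := sub_le_mul_log_div (1-x) q (by linarith) hq
  unfold dd; linarith

lemma dd_convex (p q : ℝ) {x y θ : ℝ} (hp : 0 < p) (hq : 0 < q)
    (hx : 0 ≤ x) (hx1 : x ≤ 1) (hy : 0 ≤ y) (hy1 : y ≤ 1) (hθ : 0 ≤ θ) (hθ1 : θ ≤ 1) :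
    dd p q (θ*x + (1-θ)*y) ≤ θ * dd p q x + (1-θ) * dd p q y := by
  have hc0 : 0 ≤ θ*x + (1-θ)*y := by nlinarith
  have hc1 : θ*x + (1-θ)*y ≤ 1 := by nlinarith
  have hψ1 := Real.convexOn_mul_log.2 (Set.mem_Ici.2 hx) (Set.mem_Ici.2 hy)
    hθ (sub_nonneg.2 hθ1) (by ring : θ + (1 - θ) = 1)
  have hψ2 := Real.convexOn_mul_log.2
    (Set.mem_Ici.2 (by linarith : (0:ℝ) ≤ 1 - x))
    (Set.mem_Ici.2 (by linarith : (0:ℝ) ≤ 1 - y)) hθ (sub_nonneg.2 hθ1)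
    (by ring : θ + (1 - θ) = 1)
  have hψ1' : (θ*x + (1-θ)*y) * Real.log (θ*x + (1-θ)*y)
      ≤ θ*(x*Real.log x) + (1-θ)*(y*Real.log y) := by
    simpa using hψ1
  have hψ2' : (θ*(1-x) + (1-θ)*(1-y)) * Real.log (θ*(1-x) + (1-θ)*(1-y))
      ≤ θ*((1-x)*Real.log (1-x)) + (1-θ)*((1-y)*Real.log (1-y)) := by
    simpa using hψ2
  rw [dd_eq p q _ hp hq hc0 hc1, dd_eq p q x hp hq hx hx1, dd_eq p q y hp hq hy hy1]
  have e1 : 1 - (θ*x + (1-θ)*y) = θ*(1-x) + (1-θ)*(1-y) := by ring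
  rw [e1]
  nlinarith [hψ1', hψ2']

lemma logsplit {h a c B : ℝ} (hh : 0 < h) (ha : 0 < a) (hcc : 0 < c) (hB : 0 < B) :
    Real.log (h*a/(c*B)) = Real.log (h/B) + Real.log (a/c) := by
  rw [Real.log_div (by positivity) (by positivity), Real.log_div hh.ne' hB.ne',
    Real.log_div ha.ne' hcc.ne', Real.log_mul hh.ne' ha.ne', Real.log_mul hcc.ne' hB.ne']
  ring

lemma keyA' (p q h a B : ℝ) (hp : 0 < p) (hq : 0 < q) (hh : 0 ≤ h)
    (ha0 : 0 ≤ a) (ha1 : a ≤ 1) (hB : 0 < B) :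
    h*a*Real.log (h*a/(p*B)) + h*(1-a)*Real.log (h*(1-a)/(q*B))
      = h*Real.log (h/B) + h * dd p q a := by
  rcases eq_or_lt_of_le hh with h0 | h0
  · simp [← h0]
  unfold dd
  rcases eq_or_lt_of_le ha0 with ha | ha
  · -- a = 0
    rw [← ha]
    norm_num
    rw [Real.log_div h0.ne' (mul_pos hq hB).ne', Real.log_mul hq.ne' hB.ne',
      Real.log_div h0.ne' hB.ne']
    ring
  rcases eq_or_lt_of_le ha1 with ha' | ha'
  · -- a = 1
    rw [ha']
    norm_num
    rw [Real.log_div h0.ne' (mul_pos hp hB).ne', Real.log_mul hp.ne' hB.ne',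
      Real.log_div h0.ne' hB.ne']
    ring
  · rw [logsplit h0 ha hp hB, logsplit h0 (by linarith : (0:ℝ) < 1 - a) hq hB]
    ring

-- per-σ chain rule identity
lemma keyA (N k : ℕ) (p q : ℝ) (hp : 0 < p) (hq : 0 < q) (hk : k ≤ N)
    {n t : ℕ} (hn : n < N) (htn : t ≤ n) :
    hc N k (n+1) (t+1) * Real.log (hc N k (n+1) (t+1) / (p ^ (t+1) * q ^ (n+1-(t+1))))
    + hc N k (n+1) t * Real.log (hc N k (n+1) t / (p ^ t * q ^ (n+1-t)))
    = hc N k n t * Real.log (hc N k n t / (p ^ t * q ^ (n-t)))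
      + hc N k n t * dd p q (av N k n t) := by
  have e0 : n + 1 - (t+1) = n - t := by omega
  have e1 : p^(t+1) * q^(n-t) = p * (p^t * q^(n-t)) := by rw [pow_succ]; ring
  have e2 : p^t * q^(n+1-t) = q * (p^t * q^(n-t)) := by
    rw [show n+1-t = (n-t)+1 from by omega, pow_succ]; ring
  rw [e0, e1, e2, L1a hn hk, L1b hn hk]
  by_cases hz : hc N k n t = 0
  · rw [hz]; simp
  · have ht : t ≤ k := by
      by_contra h
      exact hz (hc_zero_of_gt h)
    exact keyA' p q (hc N k n t) (av N k n t) (p^t * q^(n-t)) hp hq (hc_nonneg N k n t)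
      (av_nonneg N k n t) (av_le_one hn ht hz) (by positivity)

lemma cnt_cons_true {n : ℕ} (σ : Fin n → Bool) : cntA (Fin.cons true σ) = cntA σ + 1 := by
  rw [cntA_cons]; simp [Nat.add_comm]

lemma cnt_cons_false {n : ℕ} (σ : Fin n → Bool) : cntA (Fin.cons false σ) = cntA σ := by
  rw [cntA_cons]; simp

lemma chainA (N k : ℕ) (p q : ℝ) (hp : 0 < p) (hq : 0 < q) (hk : k ≤ N)
    {n : ℕ} (hn : n < N) :
    DD N k p q (n+1) = DD N k p q n + ee N k p q n := by
  unfold DD ee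
  rw [← Equiv.sum_comp (Fin.consEquiv (fun _ : Fin (n+1) => Bool))
    (fun σ : Fin (n+1) → Bool =>
      hc N k (n+1) (cntA σ) * Real.log (hc N k (n+1) (cntA σ) / (p ^ (cntA σ) * q ^ (n+1 - cntA σ))))]
  rw [Fintype.sum_prod_type]
  simp only [Fin.consEquiv, Equiv.coe_fn_mk]
  rw [Fintype.sum_bool, ← Finset.sum_add_distrib, ← Finset.sum_add_distrib]
  apply Finset.sum_congr rfl
  intro σ _
  have htn : cntA σ ≤ n := by
    have := cntA_le σ
    rwa [Fintype.card_fin] at this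
  rw [cnt_cons_true, cnt_cons_false]
  exact keyA N k p q hp hq hk hn htn

lemma DD0 (N k : ℕ) (p q : ℝ) (hk : k ≤ N) : DD N k p q 0 = 0 := by
  unfold DD
  rw [Fintype.sum_unique]
  have h0 : ∀ σ : Fin 0 → Bool, cntA σ = 0 := by
    intro σ; simp [cntA, Finset.univ_eq_empty]
  rw [h0]
  unfold hc
  rw [if_pos (Nat.zero_le k), Nat.sub_zero, Nat.sub_zero,
    div_self (by exact_mod_cast (Nat.choose_pos hk).ne' : ((N.choose k : ℕ):ℝ) ≠ 0)]
  simp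

lemma DDsum (N k : ℕ) (p q : ℝ) (hp : 0 < p) (hq : 0 < q) (hk : k ≤ N) :
    ∀ n, n ≤ N → DD N k p q n = ∑ j ∈ Finset.range n, ee N k p q j := by
  intro n
  induction n with
  | zero => intro _; rw [DD0 N k p q hk]; simp
  | succ n ih =>
    intro hn1
    rw [chainA N k p q hp hq hk (by omega), ih (by omega), Finset.sum_range_succ]

lemma hc_imp_le {N k n t : ℕ} (ht : t ≤ k) (hne : hc N k n t ≠ 0) : k - t ≤ N - n := by
  by_contra h
  apply hne
  unfold hc
  rw [if_pos ht, Nat.choose_eq_zero_of_lt (by omega), Nat.cast_zero, zero_div]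

lemma suma (N k : ℕ) (hk : k ≤ N) : ∀ n, n ≤ N →
    ∑ σ : Fin n → Bool, hc N k n (cntA σ) = 1 := by
  intro n
  induction n with
  | zero =>
    intro _
    rw [Fintype.sum_unique]
    have h0 : ∀ σ : Fin 0 → Bool, cntA σ = 0 := by
      intro σ; simp [cntA, Finset.univ_eq_empty]
    rw [h0]
    unfold hc
    rw [if_pos (Nat.zero_le k), Nat.sub_zero, Nat.sub_zero,
      div_self (by exact_mod_cast (Nat.choose_pos hk).ne' : ((N.choose k : ℕ):ℝ) ≠ 0)]
  | succ n ih =>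
    intro hn1
    have hn : n < N := by omega
    rw [← Equiv.sum_comp (Fin.consEquiv (fun _ : Fin (n+1) => Bool))
      (fun σ : Fin (n+1) → Bool => hc N k (n+1) (cntA σ))]
    rw [Fintype.sum_prod_type]
    simp only [Fin.consEquiv, Equiv.coe_fn_mk]
    rw [Fintype.sum_bool, ← Finset.sum_add_distrib]
    rw [show (1:ℝ) = ∑ σ : Fin n → Bool, hc N k n (cntA σ) from (ih (by omega)).symm]
    apply Finset.sum_congr rfl
    intro σ _
    rw [cnt_cons_true, cnt_cons_false, L1a hn hk, L1b hn hk]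
    ring

lemma ee_nonneg (N k : ℕ) (p q : ℝ) (hp : 0 < p) (hq : 0 < q) (hpq : p + q = 1)
    {n : ℕ} (hn : n < N) : 0 ≤ ee N k p q n := by
  unfold ee
  apply Finset.sum_nonneg
  intro σ _
  by_cases hz : hc N k n (cntA σ) = 0
  · rw [hz, zero_mul]
  · have ht : cntA σ ≤ k := by
      by_contra h
      exact hz (hc_zero_of_gt h)
    exact mul_nonneg (hc_nonneg N k n (cntA σ))
      (dd_nonneg hp hq hpq (av_nonneg N k n (cntA σ)) (av_le_one hn ht hz))

lemma ee_mono (N k : ℕ) (p q : ℝ) (hp : 0 < p) (hq : 0 < q) (hk : k ≤ N)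
    {n : ℕ} (hn : n + 1 < N) : ee N k p q n ≤ ee N k p q (n+1) := by
  have hn' : n < N := by omega
  unfold ee
  rw [← Equiv.sum_comp (Fin.consEquiv (fun _ : Fin (n+1) => Bool))
    (fun σ : Fin (n+1) → Bool => hc N k (n+1) (cntA σ) * dd p q (av N k (n+1) (cntA σ)))]
  rw [Fintype.sum_prod_type]
  simp only [Fin.consEquiv, Equiv.coe_fn_mk]
  rw [Fintype.sum_bool, ← Finset.sum_add_distrib]
  apply Finset.sum_le_sum
  intro σ _
  set t := cntA σ with htdef
  rw [cnt_cons_true, cnt_cons_false, L1a hn' hk, L1b hn' hk]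
  by_cases hz : hc N k n t = 0
  · rw [hz]; simp
  have ht : t ≤ k := by
    by_contra h
    exact hz (hc_zero_of_gt h)
  have hrM : k - t ≤ N - n := hc_imp_le ht hz
  have hM2 : 2 ≤ N - n := by omega
  have hh0 := hc_nonneg N k n t
  -- case analysis on r = k - t
  rcases Nat.eq_zero_or_pos (k - t) with hr0 | hr1
  · -- r = 0 : av n t = 0, av (n+1) t = 0
    have e1 : av N k n t = 0 := by unfold av; rw [hr0]; simp
    have e2 : av N k (n+1) t = 0 := by unfold av; rw [hr0]; simp
    rw [e1, e2]
    simp [htdef]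
  rcases eq_or_lt_of_le hrM with hrM' | hrM' 
  · -- r = M : av n t = 1, av (n+1) (t+1) = 1
    have hM0 : ((N - n : ℕ) : ℝ) ≠ 0 := Nat.cast_ne_zero.2 (by omega)
    have e1 : av N k n t = 1 := by
      unfold av; rw [hrM']; field_simp
    have e2 : av N k (n+1) (t+1) = 1 := by
      unfold av
      rw [show k - (t+1) = N - (n+1) from by omega]
      exact div_self (Nat.cast_ne_zero.2 (by omega))
    rw [e1, e2]
    simp [htdef]
  · -- 0 < r < M : convexity
    have hM1 : 1 ≤ N - n - 1 := by omega
    have hr_le : k - t ≤ N - n - 1 := by omega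
    have hcast1 : ((k - (t+1) : ℕ) : ℝ) = ((k - t : ℕ) : ℝ) - 1 := by
      rw [show k - (t+1) = (k-t) - 1 from by omega]
      push_cast [Nat.cast_sub hr1]
      ring
    have hcast2 : ((N - (n+1) : ℕ) : ℝ) = ((N - n : ℕ) : ℝ) - 1 := by
      rw [show N - (n+1) = (N-n) - 1 from by omega]
      push_cast [Nat.cast_sub (by omega : 1 ≤ N - n)]
      ring
    set R := ((k - t : ℕ) : ℝ) with hR
    set M := ((N - n : ℕ) : ℝ) with hM
    have hRpos : (1:ℝ) ≤ R := by rw [hR]; exact_mod_cast hr1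
    have hMR : R + 1 ≤ M := by
      rw [hR, hM]
      have h9 : (k - t) + 1 ≤ N - n := by omega
      exact_mod_cast h9
    have hM2' : (2:ℝ) ≤ M := by rw [hM]; exact_mod_cast hM2
    have hMne : M ≠ 0 := by linarith
    have hM1ne : M - 1 ≠ 0 := by linarith
    -- the three points
    have hav : av N k n t = R / M := rfl
    have hx1 : av N k (n+1) (t+1) = (R - 1)/(M - 1) := by
      unfold av; rw [hcast1, hcast2]
    have hx2 : av N k (n+1) t = R/(M - 1) := by
      unfold av; rw [hcast2]
    have hθ0 : 0 ≤ R / M := by positivity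
    have hθ1 : R / M ≤ 1 := by
      rw [div_le_one (by linarith : (0:ℝ) < M)]; linarith
    have hx1m : 0 ≤ (R - 1)/(M - 1) := by
      apply div_nonneg <;> linarith
    have hx1m' : (R - 1)/(M - 1) ≤ 1 := by
      rw [div_le_one (by linarith : (0:ℝ) < M - 1)]; linarith
    have hx2m : 0 ≤ R/(M - 1) := by
      apply div_nonneg <;> linarith
    have hx2m' : R/(M - 1) ≤ 1 := by
      rw [div_le_one (by linarith : (0:ℝ) < M - 1)]; linarith
    have combo : (R/M) * ((R-1)/(M-1)) + (1 - R/M) * (R/(M-1)) = R/M := by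
      field_simp
      ring
    have hconv := dd_convex p q hp hq hx1m hx1m' hx2m hx2m' hθ0 hθ1
    rw [combo] at hconv
    rw [hav, hx1, hx2]
    calc hc N k n t * dd p q (R/M)
        ≤ hc N k n t * ((R/M) * dd p q ((R-1)/(M-1)) + (1 - R/M) * dd p q (R/(M-1))) :=
          mul_le_mul_of_nonneg_left hconv hh0
      _ = hc N k n t * (R/M) * dd p q ((R-1)/(M-1))
          + hc N k n t * (1 - R/M) * dd p q (R/(M-1)) := by ring

lemma emono_chain (N k : ℕ) (p q : ℝ) (hp : 0 < p) (hq : 0 < q) (hk : k ≤ N) :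
    ∀ i j : ℕ, i ≤ j → j + 1 ≤ N → ee N k p q i ≤ ee N k p q j := by
  intro i j hij
  induction j, hij using Nat.le_induction with
  | base => intro _; exact le_rfl
  | succ j hij ih =>
    intro hj
    exact le_trans (ih (by omega)) (ee_mono N k p q hp hq hk (by omega))

lemma cheby (N k n : ℕ) (p q : ℝ) (hp : 0 < p) (hq : 0 < q) (hpq : p + q = 1) (hk : k ≤ N)
    (hn1 : 1 ≤ n) (hnN : n ≤ N) :
    (N:ℝ) * DD N k p q n ≤ (n:ℝ) * DD N k p q N := by
  have hDn := DDsum N k p q hp hq hk n hnN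
  have hDN := DDsum N k p q hp hq hk N le_rfl
  set E := ee N k p q (n-1) with hE
  have h1 : DD N k p q n ≤ (n:ℝ) * E := by
    rw [hDn]
    calc ∑ j ∈ Finset.range n, ee N k p q j ≤ ∑ _j ∈ Finset.range n, E :=
          Finset.sum_le_sum fun j hj => emono_chain N k p q hp hq hk j (n-1)
            (by simp only [Finset.mem_range] at hj; omega) (by omega)
      _ = (n:ℝ) * E := by rw [Finset.sum_const, Finset.card_range, nsmul_eq_mul]
  have h2 : ((N:ℝ) - n) * E ≤ ∑ j ∈ Finset.Ico n N, ee N k p q j := by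
    calc ((N:ℝ) - n) * E = ((N - n : ℕ) : ℝ) * E := by rw [Nat.cast_sub hnN]
      _ = ∑ _j ∈ Finset.Ico n N, E := by rw [Finset.sum_const, Nat.card_Ico, nsmul_eq_mul]
      _ ≤ ∑ j ∈ Finset.Ico n N, ee N k p q j :=
          Finset.sum_le_sum fun j hj => emono_chain N k p q hp hq hk (n-1) j
            (by simp only [Finset.mem_Ico] at hj; omega)
            (by simp only [Finset.mem_Ico] at hj; omega)
  have h3 : (n:ℝ) * DD N k p q N
      = (n:ℝ) * DD N k p q n + (n:ℝ) * ∑ j ∈ Finset.Ico n N, ee N k p q j := by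
    have h4 : DD N k p q N = DD N k p q n + ∑ j ∈ Finset.Ico n N, ee N k p q j := by
      rw [hDN, hDn, Finset.range_eq_Ico, Finset.range_eq_Ico]
      exact (Finset.sum_Ico_consecutive (ee N k p q) (Nat.zero_le n) hnN).symm
    rw [h4]; ring
  have hNn0 : (0:ℝ) ≤ (N:ℝ) - n := by
    have : (n:ℝ) ≤ N := by exact_mod_cast hnN
    linarith
  have hn0 : (0:ℝ) ≤ (n:ℝ) := Nat.cast_nonneg n
  have hA : ((N:ℝ) - n) * DD N k p q n ≤ ((N:ℝ) - n) * ((n:ℝ) * E) :=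
    mul_le_mul_of_nonneg_left h1 hNn0
  have hB : (n:ℝ) * (((N:ℝ) - n) * E) ≤ (n:ℝ) * ∑ j ∈ Finset.Ico n N, ee N k p q j :=
    mul_le_mul_of_nonneg_left h2 hn0
  nlinarith [hA, hB, h3]

lemma DDN_val (N k : ℕ) (p q : ℝ) (hk : k ≤ N) :
    DD N k p q N = ((N.choose k : ℕ) : ℝ) *
      ((((N.choose k : ℕ) : ℝ))⁻¹ *
        Real.log ((((N.choose k : ℕ) : ℝ))⁻¹ / (p^k * q^(N-k)))) := by
  classical
  unfold DD
  have key : ∀ σ : Fin N → Bool,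
      hc N k N (cntA σ) * Real.log (hc N k N (cntA σ) / (p ^ cntA σ * q ^ (N - cntA σ)))
      = if cntA σ = k
          then (((N.choose k : ℕ):ℝ))⁻¹ *
            Real.log ((((N.choose k : ℕ):ℝ))⁻¹ / (p^k * q^(N-k)))
          else 0 := by
    intro σ
    by_cases h : cntA σ = k
    · rw [if_pos h, h]
      unfold hc
      rw [if_pos le_rfl, Nat.sub_self, Nat.sub_self, Nat.choose_self, Nat.cast_one, one_div]
    · rw [if_neg h]
      rcases lt_or_gt_of_ne h with hlt | hgt
      · unfold hc
        rw [if_pos (le_of_lt hlt), Nat.sub_self,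
          Nat.choose_eq_zero_of_lt (by omega : 0 < k - cntA σ), Nat.cast_zero, zero_div,
          zero_mul]
      · rw [hc_zero_of_gt (by omega), zero_mul]
  rw [Finset.sum_congr rfl fun σ _ => key σ]
  rw [Finset.sum_ite, Finset.sum_const, Finset.sum_const_zero, add_zero]
  rw [countLemma k, Fintype.card_fin, nsmul_eq_mul]

/-- The magnetization `M[φ] = ∑_x φ(x)` of a spin configuration `φ ∈ {−1,1}^N`,
encoded as `φ : Fin N → Bool` with `true ↦ 1`, `false ↦ −1`. -/
noncomputable def mag {N : ℕ} (φ : Fin N → Bool) : ℝ :=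
  ∑ x, if φ x then (1 : ℝ) else -1

-- The set `S_m` of configurations with magnetization density `m`.
open Classical in
noncomputable def magSet (N : ℕ) (m : ℝ) : Finset (Fin N → Bool) :=
  Finset.univ.filter fun φ => mag φ / N = m

/-- Expectation of `f` in the auxiliary microcanonical ensemble `μ_MC^{m;N}`
(the uniform probability measure on `S_m`). -/
noncomputable def mcExp (N : ℕ) (m : ℝ) (f : (Fin N → Bool) → ℝ) : ℝ :=
  (∑ φ ∈ magSet N m, f φ) / ((magSet N m).card : ℝ)

/-- The auxiliary canonical partition function `Z_C(μ;N) = ∑_φ e^{−μ M[φ]}`. -/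
noncomputable def Zcan (N : ℕ) (μ : ℝ) : ℝ :=
  ∑ φ : Fin N → Bool, Real.exp (-μ * mag φ)

/-- Expectation of `f` in the auxiliary canonical ensemble `μ_C^{μ;N}`
(probability proportional to `e^{−μ M[φ]}`). -/
noncomputable def canExp (N : ℕ) (μ : ℝ) (f : (Fin N → Bool) → ℝ) : ℝ :=
  (∑ φ : Fin N → Bool, Real.exp (-μ * mag φ) * f φ) / Zcan N μ

/-- The relative entropy `H(μ_MC^{m;N} ‖ μ_C^{μ;N})`, written out as the explicit finite sum
over the support `S_m`. -/
noncomputable def relEnt (N : ℕ) (m μ : ℝ) : ℝ :=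
  ∑ φ ∈ magSet N m, ((magSet N m).card : ℝ)⁻¹ *
    Real.log (((magSet N m).card : ℝ)⁻¹ / (Real.exp (-μ * mag φ) / Zcan N μ))

/-- The projection `P_I : {−1,1}^N → {−1,1}^n` sending `φ` to the coordinates `(φ(x))_{x ∈ I}`
listed in increasing order of the original index. -/
noncomputable def projB {N n : ℕ} (I : Finset (Fin N)) (h : I.card = n)
    (φ : Fin N → Bool) (j : Fin n) : Bool :=
  φ ↑(I.orderIsoOfFin h j)


lemma mag_eq {N : ℕ} (φ : Fin N → Bool) : mag φ = 2 * (cntA φ : ℝ) - N := by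
  unfold mag
  have h : ∀ x : Fin N, (if φ x then (1:ℝ) else -1)
      = 2 * (if φ x = true then (1:ℝ) else 0) - 1 := by
    intro x; by_cases hx : φ x <;> simp [hx] <;> norm_num
  rw [Finset.sum_congr rfl fun x _ => h x, Finset.sum_sub_distrib, ← Finset.mul_sum,
    Finset.sum_const, Finset.card_univ, Fintype.card_fin]
  have h2 : ((cntA φ : ℕ) : ℝ) = ∑ x : Fin N, (if φ x = true then (1:ℝ) else 0) := by
    rw [cntA_eq_sum]
    push_cast
    rfl
  rw [← h2]
  simp

lemma magSet_eq (N : ℕ) (hN : 0 < N) (m : ℝ) (ψ : Fin N → Bool) (hψ : mag ψ / N = m) :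
    magSet N m = Finset.univ.filter (fun φ => cntA φ = cntA ψ) := by
  classical
  have hNR : (N:ℝ) ≠ 0 := Nat.cast_ne_zero.2 hN.ne'
  rw [div_eq_iff hNR] at hψ
  unfold magSet
  ext φ
  simp only [Finset.mem_filter, Finset.mem_univ, true_and]
  rw [div_eq_iff hNR, ← hψ, mag_eq, mag_eq]
  constructor
  · intro h
    have : ((cntA φ : ℕ) : ℝ) = ((cntA ψ : ℕ) : ℝ) := by linarith
    exact_mod_cast this
  · intro h
    rw [h]

lemma card_magSet (N : ℕ) (hN : 0 < N) (m : ℝ) (ψ : Fin N → Bool) (hψ : mag ψ / N = m) :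
    (magSet N m).card = N.choose (cntA ψ) := by
  classical
  rw [magSet_eq N hN m ψ hψ]
  have := countLemma (α := Fin N) (cntA ψ)
  rw [Fintype.card_fin] at this
  rw [← this]

-- ## canonical weights
lemma exp_mag {N : ℕ} (μ : ℝ) (φ : Fin N → Bool) :
    Real.exp (-μ * mag φ)
      = (Real.exp μ + Real.exp (-μ))^N *
        ((Real.exp (-μ) / (Real.exp μ + Real.exp (-μ)))^(cntA φ) *
         (Real.exp μ / (Real.exp μ + Real.exp (-μ)))^(N - cntA φ)) := by
  have hC : (0:ℝ) < Real.exp μ + Real.exp (-μ) := by positivity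
  have hcle : cntA φ ≤ N := by
    have := cntA_le φ; rwa [Fintype.card_fin] at this
  rw [mag_eq]
  rw [div_pow, div_pow]
  rw [show (Real.exp μ + Real.exp (-μ))^N *
      (Real.exp (-μ) ^ cntA φ / (Real.exp μ + Real.exp (-μ)) ^ cntA φ *
       (Real.exp μ ^ (N - cntA φ) / (Real.exp μ + Real.exp (-μ)) ^ (N - cntA φ)))
      = (Real.exp μ + Real.exp (-μ))^N / ((Real.exp μ + Real.exp (-μ)) ^ cntA φ *
          (Real.exp μ + Real.exp (-μ)) ^ (N - cntA φ)) *
        (Real.exp (-μ) ^ cntA φ * Real.exp μ ^ (N - cntA φ)) from by ring]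
  rw [← pow_add, Nat.add_sub_cancel' hcle, div_self (by positivity), one_mul]
  rw [← Real.exp_nat_mul, ← Real.exp_nat_mul, ← Real.exp_add]
  congr 1
  have : ((N - cntA φ : ℕ) : ℝ) = (N : ℝ) - (cntA φ : ℝ) := by
    push_cast [Nat.cast_sub hcle]; ring
  rw [this]
  ring

lemma Zcan_val (N : ℕ) (μ : ℝ) : Zcan N μ = (Real.exp μ + Real.exp (-μ))^N := by
  unfold Zcan
  rw [Finset.sum_congr rfl fun φ _ => exp_mag μ φ, ← Finset.mul_sum]
  have hpq : Real.exp (-μ) / (Real.exp μ + Real.exp (-μ))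
      + Real.exp μ / (Real.exp μ + Real.exp (-μ)) = 1 := by
    have hC : (0:ℝ) < Real.exp μ + Real.exp (-μ) := by positivity
    field_simp
    ring
  have := sum_pq_fin (Real.exp (-μ) / (Real.exp μ + Real.exp (-μ)))
    (Real.exp μ / (Real.exp μ + Real.exp (-μ))) N
  rw [this, hpq, one_pow, mul_one]

-- ## splitting over I and its complement
noncomputable def eIso {N : ℕ} (I : Finset (Fin N)) : Fin I.card ≃ {x // x ∈ I} :=
  (I.orderIsoOfFin rfl).toEquiv

noncomputable def Esplit {N : ℕ} (I : Finset (Fin N)) :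
    (Fin N → Bool) ≃ ({x // x ∈ I} → Bool) × ({x // ¬ x ∈ I} → Bool) :=
  (Equiv.arrowCongr (Equiv.sumCompl (fun x => x ∈ I)) (Equiv.refl Bool)).symm.trans
    (Equiv.sumArrowEquivProdArrow _ _ Bool)

lemma Esplit_symm_apply {N : ℕ} (I : Finset (Fin N))
    (u : {x // x ∈ I} → Bool) (v : {x // ¬ x ∈ I} → Bool) (x : Fin N) :
    (Esplit I).symm (u, v) x = Sum.elim u v ((Equiv.sumCompl (fun x => x ∈ I)).symm x) := rfl

lemma F1 {N : ℕ} (I : Finset (Fin N)) (u : {x // x ∈ I} → Bool) (v : {x // ¬ x ∈ I} → Bool) :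
    cntA ((Esplit I).symm (u, v)) = cntA u + cntA v := by
  rw [cntA_eq_sum, cntA_eq_sum, cntA_eq_sum]
  rw [← Equiv.sum_comp (Equiv.sumCompl (fun x => x ∈ I))
    (fun x => if (Esplit I).symm (u, v) x = true then (1:ℕ) else 0)]
  rw [Fintype.sum_sum_type]
  congr 1
  · apply Finset.sum_congr rfl
    intro a _
    rw [Esplit_symm_apply, Equiv.symm_apply_apply]
    simp
    congr
  · apply Finset.sum_congr rfl
    intro a _
    rw [Esplit_symm_apply, Equiv.symm_apply_apply]
    simp
    congr

lemma F2 {N : ℕ} (I : Finset (Fin N))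
    (u : {x // x ∈ I} → Bool) (v : {x // ¬ x ∈ I} → Bool) :
    (fun j => projB I rfl ((Esplit I).symm (u, v)) j) = fun j => u (eIso I j) := by
  funext j
  unfold projB
  rw [Esplit_symm_apply]
  have h : ((I.orderIsoOfFin rfl j : {x // x ∈ I}) : Fin N) ∈ I := (I.orderIsoOfFin rfl j).2
  rw [Equiv.sumCompl_symm_apply_of_pos h]
  show u ⟨_, h⟩ = u (eIso I j)
  exact congrArg u (Subtype.ext rfl)

lemma sum_pq_type (α : Type*) [Fintype α] [DecidableEq α] (p q : ℝ) :
    ∑ g : α → Bool, p ^ (cntA g) * q ^ (Fintype.card α - cntA g)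
      = (p + q) ^ (Fintype.card α) := by
  classical
  rw [← sum_pq_fin p q (Fintype.card α)]
  apply Fintype.sum_equiv (Equiv.arrowCongr (Fintype.equivFin α) (Equiv.refl Bool))
  intro g
  have h2 : ((Equiv.arrowCongr (Fintype.equivFin α) (Equiv.refl Bool)) g)
      = g ∘ (Fintype.equivFin α).symm := rfl
  rw [h2, cntA_comp_equiv (Fintype.equivFin α).symm g]

lemma cardIc {N : ℕ} (I : Finset (Fin N)) :
    Fintype.card {x : Fin N // ¬ x ∈ I} = N - I.card := by
  classical
  rw [Fintype.card_subtype_compl, Fintype.card_fin, Fintype.card_coe]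

lemma cardI {N : ℕ} (I : Finset (Fin N)) : Fintype.card {x : Fin N // x ∈ I} = I.card :=
  Fintype.card_coe I

lemma card_le {N : ℕ} (I : Finset (Fin N)) : I.card ≤ N := by
  have := Finset.card_le_univ I
  rwa [Fintype.card_fin] at this

lemma canExp_eq (N : ℕ) (μ : ℝ) (I : Finset (Fin N)) (f : (Fin I.card → Bool) → ℝ) :
    canExp N μ (fun φ => f (projB I rfl φ))
      = ∑ σ : Fin I.card → Bool,
          ((Real.exp (-μ) / (Real.exp μ + Real.exp (-μ)))^(cntA σ) *
           (Real.exp μ / (Real.exp μ + Real.exp (-μ)))^(I.card - cntA σ)) * f σ := by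
  classical
  set C := Real.exp μ + Real.exp (-μ) with hCdef
  have hC : (0:ℝ) < C := by rw [hCdef]; positivity
  set p := Real.exp (-μ) / C with hpdef
  set q := Real.exp μ / C with hqdef
  have hpq : p + q = 1 := by rw [hpdef, hqdef]; field_simp; ring
  unfold canExp
  rw [Zcan_val]
  have hnum : ∑ φ : Fin N → Bool, Real.exp (-μ * mag φ) * f (projB I rfl φ)
      = C^N * ∑ φ : Fin N → Bool, (p^(cntA φ) * q^(N - cntA φ)) * f (projB I rfl φ) := by
    rw [Finset.mul_sum]
    apply Finset.sum_congr rfl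
    intro φ _
    rw [exp_mag]
    ring
  rw [hnum]
  have hsplit : ∑ φ : Fin N → Bool, (p^(cntA φ) * q^(N - cntA φ)) * f (projB I rfl φ)
      = ∑ σ : Fin I.card → Bool, (p^(cntA σ) * q^(I.card - cntA σ)) * f σ := by
    rw [← Equiv.sum_comp (Esplit I).symm
      (fun φ => (p^(cntA φ) * q^(N - cntA φ)) * f (projB I rfl φ))]
    rw [Fintype.sum_prod_type]
    have hper : ∀ (u : {x // x ∈ I} → Bool),
        ∑ v : {x // ¬ x ∈ I} → Bool,
          (p^(cntA ((Esplit I).symm (u, v))) * q^(N - cntA ((Esplit I).symm (u, v)))) *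
            f (projB I rfl ((Esplit I).symm (u, v)))
        = (p^(cntA u) * q^(I.card - cntA u)) * f (fun j => u (eIso I j)) := by
      intro u
      have hcu : cntA u ≤ I.card := by
        have := cntA_le u; rwa [cardI] at this
      have hstep : ∀ v : {x // ¬ x ∈ I} → Bool,
          (p^(cntA ((Esplit I).symm (u, v))) * q^(N - cntA ((Esplit I).symm (u, v)))) *
            f (projB I rfl ((Esplit I).symm (u, v)))
          = ((p^(cntA u) * q^(I.card - cntA u)) * f (fun j => u (eIso I j))) *
            (p^(cntA v) * q^((N - I.card) - cntA v)) := by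
        intro v
        have hcv : cntA v ≤ N - I.card := by
          have := cntA_le v; rwa [cardIc] at this
        have hproj : f (projB I rfl ((Esplit I).symm (u, v))) = f (fun j => u (eIso I j)) := by
          congr 1
          exact F2 I u v
        rw [F1, hproj]
        have hexp : N - (cntA u + cntA v) = (I.card - cntA u) + ((N - I.card) - cntA v) := by
          have := card_le I
          omega
        rw [hexp, pow_add, pow_add]
        ring
      rw [Finset.sum_congr rfl fun v _ => hstep v, ← Finset.mul_sum]
      have hone : ∑ v : {x // ¬ x ∈ I} → Bool, p^(cntA v) * q^((N - I.card) - cntA v) = 1 := by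
        have := sum_pq_type {x : Fin N // ¬ x ∈ I} p q
        rw [cardIc] at this
        rw [this, hpq, one_pow]
      rw [hone, mul_one]
    rw [Finset.sum_congr rfl fun u _ => hper u]
    apply Fintype.sum_equiv (Equiv.arrowCongr (eIso I).symm (Equiv.refl Bool))
    intro u
    have h2 : ((Equiv.arrowCongr (eIso I).symm (Equiv.refl Bool)) u) = u ∘ (eIso I) := rfl
    rw [h2, cntA_comp_equiv (eIso I) u]
    rfl
  rw [hsplit, mul_comm, mul_div_assoc, div_self (by positivity : C^N ≠ 0), mul_one]

lemma mcExp_eq (N : ℕ) (hN : 0 < N) (m : ℝ) (ψ : Fin N → Bool) (hψ : mag ψ / N = m)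
    (I : Finset (Fin N)) (f : (Fin I.card → Bool) → ℝ) :
    mcExp N m (fun φ => f (projB I rfl φ))
      = ∑ σ : Fin I.card → Bool, hc N (cntA ψ) I.card (cntA σ) * f σ := by
  classical
  set k := cntA ψ with hkdef
  unfold mcExp
  rw [card_magSet N hN m ψ hψ, magSet_eq N hN m ψ hψ]
  rw [Finset.sum_filter]
  have hsplit : ∑ φ : Fin N → Bool, (if cntA φ = k then f (projB I rfl φ) else 0)
      = ∑ u : {x // x ∈ I} → Bool,
          (if cntA u ≤ k then (((N - I.card).choose (k - cntA u) : ℕ) : ℝ) else 0) *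
            f (fun j => u (eIso I j)) := by
    rw [← Equiv.sum_comp (Esplit I).symm
      (fun φ => if cntA φ = k then f (projB I rfl φ) else 0)]
    rw [Fintype.sum_prod_type]
    apply Finset.sum_congr rfl
    intro u _
    have hproj : ∀ v, f (projB I rfl ((Esplit I).symm (u, v))) = f (fun j => u (eIso I j)) := by
      intro v; congr 1; exact F2 I u v
    by_cases hcu : cntA u ≤ k
    · rw [if_pos hcu]
      have hstep : ∀ v : {x // ¬ x ∈ I} → Bool,
          (if cntA ((Esplit I).symm (u, v)) = k then f (projB I rfl ((Esplit I).symm (u, v))) else 0)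
          = (if cntA v = k - cntA u then f (fun j => u (eIso I j)) else 0) := by
        intro v
        rw [F1, hproj v]
        by_cases h : cntA v = k - cntA u
        · rw [if_pos h, if_pos (by omega)]
        · rw [if_neg h, if_neg (by omega)]
      rw [Finset.sum_congr rfl fun v _ => hstep v]
      rw [Finset.sum_ite, Finset.sum_const, Finset.sum_const_zero, add_zero]
      have hcount := countLemma (α := {x : Fin N // ¬ x ∈ I}) (k - cntA u)
      rw [cardIc] at hcount
      rw [hcount, nsmul_eq_mul]
    · rw [if_neg hcu, zero_mul]
      apply Finset.sum_eq_zero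
      intro v _
      rw [F1]
      rw [if_neg (by omega)]
  rw [hsplit, Finset.sum_div]
  have hper : ∀ u : {x // x ∈ I} → Bool,
      (if cntA u ≤ k then (((N - I.card).choose (k - cntA u) : ℕ) : ℝ) else 0) *
        f (fun j => u (eIso I j)) / ((N.choose k : ℕ) : ℝ)
      = hc N k I.card (cntA u) * f (fun j => u (eIso I j)) := by
    intro u
    unfold hc
    by_cases hcu : cntA u ≤ k
    · rw [if_pos hcu, if_pos hcu]
      ring
    · rw [if_neg hcu, if_neg hcu]
      ring
  rw [Finset.sum_congr rfl fun u _ => hper u]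
  apply Fintype.sum_equiv (Equiv.arrowCongr (eIso I).symm (Equiv.refl Bool))
  intro u
  have h2 : ((Equiv.arrowCongr (eIso I).symm (Equiv.refl Bool)) u) = u ∘ (eIso I) := rfl
  rw [h2, cntA_comp_equiv (eIso I) u]
  rfl

lemma relEnt_eq (N : ℕ) (hN : 0 < N) (m μ : ℝ) (ψ : Fin N → Bool) (hψ : mag ψ / N = m) :
    relEnt N m μ = ((N.choose (cntA ψ) : ℕ) : ℝ) *
      ((((N.choose (cntA ψ) : ℕ) : ℝ))⁻¹ *
        Real.log ((((N.choose (cntA ψ) : ℕ) : ℝ))⁻¹ /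
          ((Real.exp (-μ) / (Real.exp μ + Real.exp (-μ)))^(cntA ψ) *
           (Real.exp μ / (Real.exp μ + Real.exp (-μ)))^(N - cntA ψ)))) := by
  classical
  set k := cntA ψ with hkdef
  set C := Real.exp μ + Real.exp (-μ) with hCdef
  have hC : (0:ℝ) < C := by rw [hCdef]; positivity
  set p := Real.exp (-μ) / C with hpdef
  set q := Real.exp μ / C with hqdef
  unfold relEnt
  have hcard := card_magSet N hN m ψ hψ
  have hterm : ∀ φ ∈ magSet N m,
      ((magSet N m).card : ℝ)⁻¹ *
        Real.log (((magSet N m).card : ℝ)⁻¹ / (Real.exp (-μ * mag φ) / Zcan N μ))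
      = ((N.choose k : ℕ) : ℝ)⁻¹ *
        Real.log ((((N.choose k : ℕ) : ℝ))⁻¹ / (p^k * q^(N-k))) := by
    intro φ hφ
    have hcnt : cntA φ = k := by
      rw [magSet_eq N hN m ψ hψ] at hφ
      simpa using hφ
    have hw : Real.exp (-μ * mag φ) / Zcan N μ = p^k * q^(N-k) := by
      rw [exp_mag, Zcan_val, ← hcnt]
      rw [mul_comm, mul_div_assoc, div_self (by positivity : C^N ≠ 0), mul_one]
    rw [hw, hcard]
  rw [Finset.sum_congr rfl hterm, Finset.sum_const, hcard, nsmul_eq_mul]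

theorem stmt6 (N : ℕ) (m : ℝ)
    (hm : ∃ φ : Fin N → Bool, mag φ / N = m) (hm₁ : m ≠ -1) (hm₂ : m ≠ 1)
    (μ : ℝ) (I : Finset (Fin N)) (hI : I.Nonempty)
    (f : (Fin I.card → Bool) → ℝ) :
    |mcExp N m (fun φ => f (projB I rfl φ)) - canExp N μ (fun φ => f (projB I rfl φ))| ^ 2 / 2 ≤
      (I.card : ℝ) * (Finset.univ.sup' Finset.univ_nonempty fun σ : Fin I.card → Bool => |f σ|) ^ 2 *
        (relEnt N m μ / N) := by
  classical
  obtain ⟨ψ, hψ⟩ := hm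
  obtain ⟨x0, hx0⟩ := hI
  have hN : 0 < N := x0.pos
  set k := cntA ψ with hkdef
  have hkN : k ≤ N := by
    have := cntA_le ψ; rwa [Fintype.card_fin] at this
  have hn1 : 1 ≤ I.card := Finset.card_pos.2 ⟨x0, hx0⟩
  have hnN : I.card ≤ N := card_le I
  have hNR : (N:ℝ) ≠ 0 := Nat.cast_ne_zero.2 hN.ne'
  have hmagψ : mag ψ = 2*(k:ℝ) - N := mag_eq ψ
  have hk1 : 1 ≤ k := by
    by_contra h
    have hk0 : k = 0 := by omega
    apply hm₁
    rw [← hψ, hmagψ, hk0]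
    push_cast
    field_simp
    ring
  have hkN' : k < N := by
    rcases eq_or_lt_of_le hkN with h | h
    · exfalso
      apply hm₂
      rw [← hψ, hmagψ, h]
      field_simp
      ring
    · exact h
  set C := Real.exp μ + Real.exp (-μ) with hCdef
  have hC : (0:ℝ) < C := by rw [hCdef]; positivity
  set p := Real.exp (-μ) / C with hpdef
  set q := Real.exp μ / C with hqdef
  have hp : 0 < p := by rw [hpdef]; positivity
  have hq : 0 < q := by rw [hqdef]; positivity
  have hpq : p + q = 1 := by rw [hpdef, hqdef]; field_simp; ring
  have hmc := mcExp_eq N hN m ψ hψ I f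
  have hcan := canExp_eq N μ I f
  set F := Finset.univ.sup' Finset.univ_nonempty fun σ : Fin I.card → Bool => |f σ| with hFdef
  have hFb : ∀ σ : Fin I.card → Bool, |f σ| ≤ F := by
    intro σ
    have h := Finset.le_sup' (fun σ : Fin I.card → Bool => |f σ|) (Finset.mem_univ σ)
    exact h
  have hF0 : 0 ≤ F := le_trans (abs_nonneg _) (hFb (fun _ => false))
  set a : (Fin I.card → Bool) → ℝ := fun σ => hc N k I.card (cntA σ) with hadef
  set b : (Fin I.card → Bool) → ℝ := fun σ => p^(cntA σ) * q^(I.card - cntA σ) with hbdef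
  have hdiff : mcExp N m (fun φ => f (projB I rfl φ)) - canExp N μ (fun φ => f (projB I rfl φ))
      = ∑ σ : Fin I.card → Bool, f σ * (a σ - b σ) := by
    rw [hmc, hcan, ← Finset.sum_sub_distrib]
    apply Finset.sum_congr rfl
    intro σ _
    rw [hadef, hbdef]
    ring
  set S := ∑ σ : Fin I.card → Bool, |a σ - b σ| with hSdef
  have habs : |mcExp N m (fun φ => f (projB I rfl φ))
      - canExp N μ (fun φ => f (projB I rfl φ))| ≤ F * S := by
    rw [hdiff]
    calc |∑ σ : Fin I.card → Bool, f σ * (a σ - b σ)|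
        ≤ ∑ σ : Fin I.card → Bool, |f σ * (a σ - b σ)| := Finset.abs_sum_le_sum_abs _ _
      _ ≤ ∑ σ : Fin I.card → Bool, F * |a σ - b σ| := by
          apply Finset.sum_le_sum
          intro σ _
          rw [abs_mul]
          exact mul_le_mul_of_nonneg_right (hFb σ) (abs_nonneg _)
      _ = F * S := by rw [hSdef, Finset.mul_sum]
  have hb1 : ∑ σ : Fin I.card → Bool, b σ = 1 := by
    have h := sum_pq_fin p q I.card
    rw [hpq, one_pow] at h
    exact h
  have hP := pinsker a b (fun σ => hc_nonneg N k I.card (cntA σ))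
    (fun σ => by rw [hbdef]; positivity) (suma N k hkN I.card hnN) hb1
  have hDD : ∑ σ : Fin I.card → Bool, a σ * Real.log (a σ / b σ) = DD N k p q I.card := by rw [hadef, hbdef]; rfl
  rw [hDD] at hP
  have hcheb := cheby N k I.card p q hp hq hpq hkN hn1 hnN
  have hrel : relEnt N m μ = DD N k p q N := by
    rw [relEnt_eq N hN m μ ψ hψ, DDN_val N k p q hkN]
  have hS0 : 0 ≤ S := Finset.sum_nonneg fun σ _ => abs_nonneg _
  have hDn0 : 0 ≤ DD N k p q I.card := by nlinarith [hP, sq_nonneg S]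
  have h3 : DD N k p q I.card ≤ (I.card:ℝ) * relEnt N m μ / N := by
    rw [le_div_iff₀ (by exact_mod_cast hN : (0:ℝ) < N)]
    rw [hrel]
    linarith [hcheb]
  have key1 : |mcExp N m (fun φ => f (projB I rfl φ))
      - canExp N μ (fun φ => f (projB I rfl φ))| ^ 2 / 2 ≤ F^2 * DD N k p q I.card := by
    have h2 : |mcExp N m (fun φ => f (projB I rfl φ))
        - canExp N μ (fun φ => f (projB I rfl φ))| ^ 2 ≤ (F*S)^2 :=
      pow_le_pow_left₀ (abs_nonneg _) habs 2
    have h4 : F^2 * S^2 ≤ F^2 * (2 * DD N k p q I.card) :=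
      mul_le_mul_of_nonneg_left hP (by positivity)
    have h2' : (F*S)^2 = F^2 * S^2 := by ring
    linarith [h2, h4, h2']
  have key2 : F^2 * DD N k p q I.card ≤ (I.card:ℝ) * F^2 * (relEnt N m μ / N) := by
    have h5 : F^2 * DD N k p q I.card ≤ F^2 * ((I.card:ℝ) * relEnt N m μ / N) :=
      mul_le_mul_of_nonneg_left h3 (by positivity)
    calc F^2 * DD N k p q I.card ≤ F^2 * ((I.card:ℝ) * relEnt N m μ / N) := h5
      _ = (I.card:ℝ) * F^2 * (relEnt N m μ / N) := by ring
  linarith [key1, key2]
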